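/- arXiv:1304.1770 — 2 statements merged into one kernel-verified Lean document; each statement's English description precedes it below -/
import Mathlib

section
/- Let α, β, δ be nonnegative integers and γ an arbitrary integer. The T² = S¹ × S¹ action on S³ × S³ given by (z, w) ∗ ((p₁, q₁), (p₂, q₂)) = ((z p₁, z^α w^β q₁), (w p₂, z^γ w^δ q₂)) is free if and only if α = δ = 1 and |1 − βγ| = 1. -/
open Real

/-- The unit 3-sphere `S³ = {(p, q) ∈ ℂ² : |p|² + |q|² = 1}`. -/
def Sphere3 : Set (ℂ × ℂ) := {p | ‖p.1‖ ^ 2 + ‖p.2‖ ^ 2 = 1}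

private lemma circle_coe_pow (z : Circle) (k : ℕ) : ((z ^ k : Circle) : ℂ) = (z : ℂ) ^ k :=
  map_pow Circle.coeHom z k

private lemma circle_coe_zpow (z : Circle) (n : ℤ) : ((z ^ n : Circle) : ℂ) = (z : ℂ) ^ n := by
  cases n with
  | ofNat k => simp [zpow_natCast, circle_coe_pow]
  | negSucc k => simp [zpow_negSucc, circle_coe_pow]

private lemma circle_exp_zpow (r : ℝ) (n : ℤ) :
    Circle.exp r ^ n = Circle.exp (n * r) := by
  ext
  rw [circle_coe_zpow, Circle.coe_exp, Circle.coe_exp, ← Complex.exp_int_mul]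
  push_cast
  ring_nf

private lemma circle_exp_pi_ne_one : Circle.exp π ≠ 1 := by
  intro h
  have h2 : (Circle.exp π : ℂ) = 1 := by rw [h]; rfl
  rw [Circle.coe_exp, Complex.exp_pi_mul_I] at h2
  norm_num at h2

private lemma fixed_iff (z u : Circle) :
    (∃ p q : ℂ, (p, q) ∈ Sphere3 ∧ (z : ℂ) * p = p ∧ (u : ℂ) * q = q) ↔ z = 1 ∨ u = 1 := by
  constructor
  · rintro ⟨p, q, hpq, hz, hu⟩
    by_cases hp : p = 0
    · right
      have hq : q ≠ 0 := by
        intro h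
        simp [Sphere3, hp, h] at hpq
      have : (u : ℂ) = 1 := by
        have := hu
        nth_rewrite 2 [← one_mul q] at this
        exact mul_right_cancel₀ hq this
      exact Subtype.ext this
    · left
      have : (z : ℂ) = 1 := by
        nth_rewrite 2 [← one_mul p] at hz
        exact mul_right_cancel₀ hp hz
      exact Subtype.ext this
  · rintro (rfl | rfl)
    · exact ⟨1, 0, by simp [Sphere3], by simp, by simp⟩
    · exact ⟨0, 1, by simp [Sphere3], by simp, by simp⟩

private lemma exists_root (k : ℕ) (hk : k ≠ 1) : ∃ z : Circle, z ≠ 1 ∧ z ^ k = 1 := by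
  rcases Nat.eq_zero_or_pos k with h0 | hpos
  · exact ⟨Circle.exp π, circle_exp_pi_ne_one, by simp [h0]⟩
  · have hk2 : 2 ≤ k := by omega
    refine ⟨Circle.exp (2 * π / k), ?_, ?_⟩
    · intro h
      rw [Circle.exp_eq_one] at h
      obtain ⟨n, hn⟩ := h
      have hπ := Real.pi_pos
      have hkR : (0:ℝ) < k := by positivity
      have hπ2 : (2 * π : ℝ) ≠ 0 := by positivity
      have h1 : (1 : ℝ) = n * k := by
        field_simp at hn
        have h2 : 2 * π * 1 = 2 * π * ((n : ℝ) * k) := by rw [mul_comm (n : ℝ) (k : ℝ), ← hn]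
        have := mul_left_cancel₀ hπ2 h2
        linarith
      have h1' : (1 : ℤ) = n * k := by exact_mod_cast h1
      have : (k : ℤ) ∣ 1 := ⟨n, by linarith⟩
      have := Int.le_of_dvd one_pos this
      omega
    · rw [← zpow_natCast, circle_exp_zpow]
      have : (k : ℝ) * (2 * π / k) = 2 * π := by
        field_simp
      push_cast
      rw [this, Circle.exp_two_pi]

/-- For nonnegative integers `α, β, δ` and an integer `γ`, the `T²` action on
`S³ × S³` given by `(z, w) ∗ ((p₁, q₁), (p₂, q₂)) = ((z p₁, z^α w^β q₁), (w p₂, z^γ w^δ q₂))`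
is free iff `α = δ = 1` and `|1 − βγ| = 1`. -/
theorem torus_action_free_iff (α β δ : ℕ) (γ : ℤ) :
    (∀ z w : Circle,
      (∃ p₁ q₁ p₂ q₂ : ℂ, (p₁, q₁) ∈ Sphere3 ∧ (p₂, q₂) ∈ Sphere3 ∧
        (z : ℂ) * p₁ = p₁ ∧ ((z ^ α * w ^ β : Circle) : ℂ) * q₁ = q₁ ∧
        (w : ℂ) * p₂ = p₂ ∧ ((z ^ γ * w ^ δ : Circle) : ℂ) * q₂ = q₂) →
      z = 1 ∧ w = 1) ↔
    (α = 1 ∧ δ = 1 ∧ (1 - (β : ℤ) * γ).natAbs = 1) := by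
  have key : ∀ z w : Circle,
      (∃ p₁ q₁ p₂ q₂ : ℂ, (p₁, q₁) ∈ Sphere3 ∧ (p₂, q₂) ∈ Sphere3 ∧
        (z : ℂ) * p₁ = p₁ ∧ ((z ^ α * w ^ β : Circle) : ℂ) * q₁ = q₁ ∧
        (w : ℂ) * p₂ = p₂ ∧ ((z ^ γ * w ^ δ : Circle) : ℂ) * q₂ = q₂) ↔
      ((z = 1 ∨ z ^ α * w ^ β = 1) ∧ (w = 1 ∨ z ^ γ * w ^ δ = 1)) := by
    intro z w
    constructor
    · rintro ⟨p₁, q₁, p₂, q₂, h1, h2, h3, h4, h5, h6⟩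
      exact ⟨(fixed_iff z (z ^ α * w ^ β)).1 ⟨p₁, q₁, h1, h3, h4⟩,
        (fixed_iff w (z ^ γ * w ^ δ)).1 ⟨p₂, q₂, h2, h5, h6⟩⟩
    · rintro ⟨h1, h2⟩
      obtain ⟨p₁, q₁, a1, a2, a3⟩ := (fixed_iff z (z ^ α * w ^ β)).2 h1
      obtain ⟨p₂, q₂, b1, b2, b3⟩ := (fixed_iff w (z ^ γ * w ^ δ)).2 h2
      exact ⟨p₁, q₁, p₂, q₂, a1, b1, a2, a3, b2, b3⟩
  simp only [key]
  constructor
  · intro H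
    have hα : α = 1 := by
      by_contra hα
      obtain ⟨z, hz, hzk⟩ := exists_root α hα
      exact hz (H z 1 ⟨Or.inr (by simp [hzk]), Or.inl rfl⟩).1
    have hδ : δ = 1 := by
      by_contra hδ
      obtain ⟨w, hw, hwk⟩ := exists_root δ hδ
      exact hw (H 1 w ⟨Or.inl rfl, Or.inr (by simp [hwk])⟩).2
    subst hα; subst hδ
    refine ⟨rfl, rfl, ?_⟩
    by_contra hn
    set m : ℤ := 1 - (β : ℤ) * γ with hm
    rcases Nat.lt_or_ge m.natAbs 2 with hlt | hge
    · -- natAbs m = 0, so β * γ = 1, hence β = 1 and γ = 1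
      have hm0 : m = 0 := by omega
      have hβγ : (β : ℤ) * γ = 1 := by omega
      have hβ : (β : ℤ) = 1 :=
        Int.eq_one_of_mul_eq_one_right (Int.natCast_nonneg β) hβγ
      have hγ1 : γ = 1 := by rw [hβ, one_mul] at hβγ; exact hβγ
      have hβ1 : β = 1 := by exact_mod_cast hβ
      subst hβ1; subst hγ1
      have c1 : Circle.exp π ^ 1 * Circle.exp π ^ 1 = 1 := by
        rw [pow_one, ← Circle.exp_add]
        have : π + π = 2 * π := by ring
        rw [this, Circle.exp_two_pi]
      have c2 : Circle.exp π ^ (1 : ℤ) * Circle.exp π ^ 1 = 1 := by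
        rw [zpow_one, pow_one, ← Circle.exp_add]
        have : π + π = 2 * π := by ring
        rw [this, Circle.exp_two_pi]
      exact circle_exp_pi_ne_one
        (H (Circle.exp π) (Circle.exp π) ⟨Or.inr c1, Or.inr c2⟩).1
    · -- natAbs m ≥ 2
      set n : ℕ := m.natAbs with hn2
      set w : Circle := Circle.exp (2 * π / n) with hwdef
      set z : Circle := w ^ (-(β : ℤ)) with hzdef
      have hnR : (n : ℝ) ≠ 0 := by positivity
      have c1 : z ^ 1 * w ^ β = 1 := by
        rw [hzdef]
        group
      have hwm : w ^ m = 1 := by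
        rcases Int.natAbs_eq m with h | h
        · rw [h, ← hn2, hwdef, circle_exp_zpow]
          push_cast
          have : (n : ℝ) * (2 * π / n) = 2 * π := by
            field_simp
          rw [this, Circle.exp_two_pi]
        · rw [h, ← hn2, hwdef, circle_exp_zpow]
          have : ((-(n : ℤ) : ℤ) : ℝ) * (2 * π / n) = ((-1 : ℤ) : ℝ) * (2 * π) := by
            push_cast
            field_simp
          rw [this, Circle.exp_int_mul_two_pi]
      have c2 : z ^ γ * w ^ 1 = 1 := by
        rw [hzdef, ← hwm, hm]
        group
      have hw_ne : w ≠ 1 := by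
        rw [hwdef]
        intro h
        rw [Circle.exp_eq_one] at h
        obtain ⟨j, hj⟩ := h
        have hπ2 : (2 * π : ℝ) ≠ 0 := by positivity
        have h1 : (1 : ℝ) = j * n := by
          field_simp at hj
          have h2 : 2 * π * 1 = 2 * π * ((j : ℝ) * n) := by rw [mul_comm (j : ℝ) (n : ℝ), ← hj]
          have := mul_left_cancel₀ hπ2 h2
          linarith
        have h1' : (1 : ℤ) = j * n := by exact_mod_cast h1
        have : (n : ℤ) ∣ 1 := ⟨j, by linarith⟩
        have := Int.le_of_dvd one_pos this
        omega
      exact hw_ne (H z w ⟨Or.inr c1, Or.inr c2⟩).2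
  · rintro ⟨hα, hδ, hm⟩ z w ⟨h1, h2⟩
    subst hα; subst hδ
    rcases h1 with rfl | h1
    · rcases h2 with rfl | h2
      · exact ⟨rfl, rfl⟩
      · refine ⟨rfl, ?_⟩
        simpa using h2
    · rcases h2 with rfl | h2
      · refine ⟨?_, rfl⟩
        simpa using h1
      · have hz : z = (w ^ β)⁻¹ := eq_inv_of_mul_eq_one_left (by simpa using h1)
        have h2' : z ^ γ * w = 1 := by simpa using h2
        have hw : w ^ (1 - (β : ℤ) * γ) = 1 := by
          have hgrp : w ^ (1 - (β : ℤ) * γ) = ((w ^ β)⁻¹) ^ γ * w := by group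
          rw [hgrp, ← hz, h2']
        have h1n : (1 - (β : ℤ) * γ) = 1 ∨ (1 - (β : ℤ) * γ) = -1 := by
          rcases Int.natAbs_eq_iff.mp hm with h | h
          · left; exact_mod_cast h
          · right; exact_mod_cast h
        have hw1 : w = 1 := by
          rcases h1n with h | h
          · rwa [h, zpow_one] at hw
          · rwa [h, zpow_neg, zpow_one, inv_eq_one] at hw
        subst hw1
        refine ⟨by simp [hz], rfl⟩
end

section
/- Let a, b, c, d be integers with gcd(a, b, c, d) = 1. The S¹ action on SU(2) × SU(2) given by z ∗ (A, B) = (D(z^a) · A · D(z^c)⁻¹, D(z^b) · B · D(z^d)⁻¹) is effectively free if and only if for every choice of signs ε, ε' ∈ {1, −1}, gcd(a + εc, b + ε'd) divides 2 (equivalently, equals 1 or 2). -/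
open Matrix
open Real

/-- `D u = diag(u, ū)` for `u` in the circle. -/
noncomputable def DMat (u : Circle) : Matrix (Fin 2) (Fin 2) ℂ :=
  Matrix.diagonal ![(u : ℂ), (starRingEnd ℂ) (u : ℂ)]

lemma DMat_mul (u v : Circle) : DMat u * DMat v = DMat (u * v) := by
  ext i j
  fin_cases i <;> fin_cases j <;>
    simp [DMat, Matrix.mul_apply, Fin.sum_univ_two, Matrix.diagonal]

lemma DMat_one : DMat 1 = 1 := by
  ext i j
  fin_cases i <;> fin_cases j <;> simp [DMat, Matrix.diagonal, Matrix.one_apply]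

lemma DMat_inv (v : Circle) : (DMat v)⁻¹ = DMat v⁻¹ := by
  apply Matrix.inv_eq_right_inv
  rw [DMat_mul, mul_inv_cancel, DMat_one]

lemma tri (u v : Circle) (A : Matrix (Fin 2) (Fin 2) ℂ) (i j : Fin 2) :
    (DMat u * A * DMat v) i j
      = ![(u:ℂ), (starRingEnd ℂ) (u:ℂ)] i * A i j * ![(v:ℂ), (starRingEnd ℂ) (v:ℂ)] j := by
  rw [DMat, DMat, Matrix.mul_diagonal, Matrix.diagonal_mul]

lemma conj_coe (u : Circle) : (starRingEnd ℂ) (u : ℂ) = ((u:ℂ))⁻¹ := by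
  rw [← Circle.coe_inv_eq_conj, Circle.coe_inv]

def Jmat : Matrix (Fin 2) (Fin 2) ℂ := !![0, 1; -1, 0]

lemma Jmat_mem : Jmat ∈ Matrix.specialUnitaryGroup (Fin 2) ℂ := by
  rw [Matrix.mem_specialUnitaryGroup_iff]
  constructor
  · rw [Matrix.mem_unitaryGroup_iff]
    ext i j
    fin_cases i <;> fin_cases j <;>
      simp [Jmat, Matrix.mul_apply, Fin.sum_univ_two, Matrix.one_apply, star_apply]
  · simp [Jmat, Matrix.det_fin_two]

lemma one_mem' : (1 : Matrix (Fin 2) (Fin 2) ℂ) ∈ Matrix.specialUnitaryGroup (Fin 2) ℂ :=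
  Submonoid.one_mem _

lemma det_one_of_mem {A : Matrix (Fin 2) (Fin 2) ℂ}
    (h : A ∈ Matrix.specialUnitaryGroup (Fin 2) ℂ) : A.det = 1 :=
  (Matrix.mem_specialUnitaryGroup_iff.mp h).2

lemma mul_self_entry {w A : ℂ} (h : w * A = A) (hw : w ≠ 1) : A = 0 := by
  have h2 : (w - 1) * A = 0 := by linear_combination h
  rcases mul_eq_zero.mp h2 with h3 | h3
  · exact absurd (by linear_combination h3) hw
  · exact h3

lemma fix_imp (u v : Circle) (A : Matrix (Fin 2) (Fin 2) ℂ) (hdet : A.det = 1)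
    (h : DMat u * A * (DMat v)⁻¹ = A) : u * v⁻¹ = 1 ∨ u * v = 1 := by
  by_contra hc
  push_neg at hc
  obtain ⟨h1, h2⟩ := hc
  have h1' : (u:ℂ) * ((v:ℂ))⁻¹ ≠ 1 := by
    intro he; exact h1 (Circle.coe_eq_one.mp (by push_cast; exact he))
  have h2' : (u:ℂ) * (v:ℂ) ≠ 1 := by
    intro he; exact h2 (Circle.coe_eq_one.mp (by push_cast; exact he))
  rw [DMat_inv] at h
  have e : ∀ i j, (DMat u * A * DMat v⁻¹) i j = A i j := fun i j => by rw [h]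
  have e00 := e 0 0; have e01 := e 0 1; have e10 := e 1 0; have e11 := e 1 1
  rw [tri] at e00 e01 e10 e11
  simp only [Matrix.cons_val_zero, Matrix.cons_val_one, Matrix.head_cons,
    conj_coe, Circle.coe_inv, map_inv₀, inv_inv] at e00 e01 e10 e11
  set w : ℂ := (u : ℂ) with hw
  set x : ℂ := (v : ℂ) with hx
  have A00 : A 0 0 = 0 := mul_self_entry (w := w * x⁻¹) (by linear_combination e00) h1'
  have A01 : A 0 1 = 0 := mul_self_entry (w := w * x) (by linear_combination e01) h2'
  have A10 : A 1 0 = 0 := mul_self_entry (w := w⁻¹ * x⁻¹) (by linear_combination e10) (by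
    intro he
    rw [← mul_inv] at he
    exact h2' (inv_eq_one.mp he))
  have A11 : A 1 1 = 0 := mul_self_entry (w := w⁻¹ * x) (by linear_combination e11) (by
    intro he
    apply h1'
    rw [show w * x⁻¹ = (w⁻¹ * x)⁻¹ from by rw [mul_inv, inv_inv], he, inv_one])
  rw [Matrix.det_fin_two, A00, A01, A10, A11] at hdet
  simp at hdet

lemma fix_one_of (u v : Circle) (h : u * v⁻¹ = 1) :
    DMat u * 1 * (DMat v)⁻¹ = 1 := by
  rw [mul_one, DMat_inv, DMat_mul, h, DMat_one]

lemma fix_J_of (u v : Circle) (h : u * v = 1) :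
    DMat u * Jmat * (DMat v)⁻¹ = Jmat := by
  have huv : (u:ℂ) * (v:ℂ) = 1 := by rw [← Circle.coe_mul, h, Circle.coe_one]
  have hx : ((v:ℂ))⁻¹ = ((u:ℂ)) := inv_eq_of_mul_eq_one_left huv
  rw [DMat_inv]
  ext i j
  rw [tri]
  fin_cases i <;> fin_cases j
  all_goals simp [Jmat, conj_coe, Circle.coe_inv, map_inv₀, inv_inv, hx]

lemma fix_one_imp (u v : Circle) (h : DMat u * 1 * (DMat v)⁻¹ = 1) :
    u * v⁻¹ = 1 := by
  rw [mul_one, DMat_inv, DMat_mul] at h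
  have e := congrFun (congrFun h 0) 0
  simp [DMat, Matrix.diagonal, Matrix.one_apply] at e
  exact Circle.coe_eq_one.mp e

lemma fix_J_imp (u v : Circle) (h : DMat u * Jmat * (DMat v)⁻¹ = Jmat) :
    u * v = 1 := by
  rw [DMat_inv] at h
  have e := congrFun (congrFun h 0) 1
  rw [tri] at e
  simp only [Matrix.cons_val_zero, Matrix.cons_val_one, Matrix.head_cons,
    conj_coe, Circle.coe_inv, map_inv₀, inv_inv, Jmat] at e
  simp at e
  apply Circle.coe_eq_one.mp
  push_cast
  linear_combination e

lemma fix_all' (u : Circle) (h2 : u * u = 1)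
    (A : Matrix (Fin 2) (Fin 2) ℂ) : DMat u * A * (DMat u)⁻¹ = A := by
  have hw : (u:ℂ) * (u:ℂ) = 1 := by rw [← Circle.coe_mul, h2, Circle.coe_one]
  have hiw : ((u:ℂ))⁻¹ = (u:ℂ) := inv_eq_of_mul_eq_one_left hw
  rw [DMat_inv]
  ext i j
  rw [tri]
  fin_cases i <;> fin_cases j
  all_goals simp [conj_coe, Circle.coe_inv, map_inv₀, inv_inv, hiw]
  all_goals linear_combination A _ _ * hw

lemma fix_all (u v : Circle) (h1 : u * v⁻¹ = 1) (h2 : u * v = 1)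
    (A : Matrix (Fin 2) (Fin 2) ℂ) : DMat u * A * (DMat v)⁻¹ = A := by
  have hv : v = u := (mul_inv_eq_one.mp h1).symm
  rw [hv] at h2 ⊢
  exact fix_all' u h2 A

lemma zpow_gcd (z : Circle) (m n : ℤ) (hm : z ^ m = 1) (hn : z ^ n = 1) :
    z ^ (Int.gcd m n : ℤ) = 1 := by
  rw [Int.gcd_eq_gcd_ab m n, _root_.zpow_add, _root_.zpow_mul, _root_.zpow_mul, hm, hn,
    _root_.one_zpow, _root_.one_zpow, one_mul]

lemma zpow_two_gcd (z : Circle) (m n : ℤ) (hm : z ^ (2 * m) = 1) (hn : z ^ (2 * n) = 1) :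
    z ^ (2 * (Int.gcd m n : ℤ)) = 1 := by
  have h := zpow_gcd z _ _ hm hn
  have e : (Int.gcd (2 * m) (2 * n) : ℤ) = 2 * (Int.gcd m n : ℤ) := by
    rw [Int.gcd_mul_left]
    push_cast
    ring
  rwa [e] at h

lemma exp_pow (t : ℝ) (n : ℕ) : Circle.exp t ^ n = Circle.exp (n * t) := by
  induction n with
  | zero => simp
  | succ n ih =>
    rw [pow_succ, ih, ← Circle.exp_add]
    congr 1
    push_cast
    ring

lemma exp_order (n : ℕ) (hn : 3 ≤ n) :
    (Circle.exp (2 * π / n)) ^ (n : ℤ) = 1 ∧ (Circle.exp (2 * π / n)) ^ (2 : ℤ) ≠ 1 := by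
  have hn0 : (n : ℝ) ≠ 0 := by positivity
  constructor
  · rw [zpow_natCast, exp_pow]
    rw [show (n : ℝ) * (2 * π / n) = 2 * π by field_simp]
    exact Circle.exp_two_pi
  · rw [show (2:ℤ) = ((2:ℕ):ℤ) from rfl, zpow_natCast, exp_pow]
    intro h
    rw [Circle.exp_eq_one] at h
    obtain ⟨k, hk⟩ := h
    have hpi : (0:ℝ) < π := Real.pi_pos
    have hk' : (k : ℝ) * n = 2 := by
      field_simp at hk
      push_cast at hk
      linarith
    have hn3 : (3:ℝ) ≤ n := by exact_mod_cast hn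
    rcases le_or_gt (k:ℝ) 0 with h0 | h0
    · nlinarith
    · have : (1:ℝ) ≤ k := by exact_mod_cast (by exact_mod_cast h0 : (0:ℤ) < k)
      nlinarith

lemma exists_wit (z : Circle) (p q : ℤ) (ε : ℤ) (hε : ε = 1 ∨ ε = -1)
    (h : z ^ (p + ε * q) = 1) :
    ∃ M : Matrix (Fin 2) (Fin 2) ℂ, M ∈ Matrix.specialUnitaryGroup (Fin 2) ℂ ∧
      DMat (z ^ p) * M * (DMat (z ^ q))⁻¹ = M := by
  rcases hε with rfl | rfl
  · refine ⟨Jmat, Jmat_mem, fix_J_of _ _ ?_⟩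
    rw [← _root_.zpow_add]
    rw [one_mul] at h
    exact h
  · refine ⟨1, one_mem', fix_one_of _ _ ?_⟩
    rw [← _root_.zpow_sub, show p - q = p + (-1) * q from by ring]
    exact h

lemma pair_of (z : Circle) (p q : ℤ) (ε : ℤ) (hε : ε = 1 ∨ ε = -1)
    (h : z ^ (p + ε * q) = 1) (hz2 : z ^ (2:ℤ) = 1) :
    z ^ p * (z ^ q)⁻¹ = 1 ∧ z ^ p * z ^ q = 1 := by
  rcases hε with rfl | rfl
  · rw [one_mul] at h
    constructor
    · rw [← _root_.zpow_sub,
        show p - q = (p + q) + 2 * (-q) from by ring, _root_.zpow_add, h,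
        _root_.zpow_mul, hz2, _root_.one_zpow, one_mul]
    · rw [← _root_.zpow_add]; exact h
  · constructor
    · rw [← _root_.zpow_sub, show p - q = p + (-1) * q from by ring]; exact h
    · rw [← _root_.zpow_add,
        show p + q = (p + (-1) * q) + 2 * q from by ring, _root_.zpow_add, h,
        _root_.zpow_mul, hz2, _root_.one_zpow, one_mul]

/-- For integers `a, b, c, d` with `gcd(a, b, c, d) = 1`, the `S¹` action on
`SU(2) × SU(2)` given by `z ∗ (A, B) = (D(z^a) A D(z^c)⁻¹, D(z^b) B D(z^d)⁻¹)` is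
effectively free iff for every choice of signs `ε, ε' ∈ {1, −1}`,
`gcd(a + εc, b + ε'd)` divides `2` (i.e. equals `1` or `2`). -/
theorem circle_action_effectively_free_iff (a b c d : ℤ)
    (hgcd : Int.gcd a (Int.gcd b (Int.gcd c d : ℤ) : ℤ) = 1) :
    (∀ z : Circle,
      (∃ A B : Matrix (Fin 2) (Fin 2) ℂ,
        A ∈ Matrix.specialUnitaryGroup (Fin 2) ℂ ∧ B ∈ Matrix.specialUnitaryGroup (Fin 2) ℂ ∧
        DMat (z ^ a) * A * (DMat (z ^ c))⁻¹ = A ∧ DMat (z ^ b) * B * (DMat (z ^ d))⁻¹ = B) →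
      (∀ A B : Matrix (Fin 2) (Fin 2) ℂ,
        A ∈ Matrix.specialUnitaryGroup (Fin 2) ℂ → B ∈ Matrix.specialUnitaryGroup (Fin 2) ℂ →
        DMat (z ^ a) * A * (DMat (z ^ c))⁻¹ = A ∧ DMat (z ^ b) * B * (DMat (z ^ d))⁻¹ = B)) ↔
    (∀ ε ε' : ℤ, (ε = 1 ∨ ε = -1) → (ε' = 1 ∨ ε' = -1) →
      (Int.gcd (a + ε * c) (b + ε' * d) : ℤ) ∣ 2) := by
  constructor
  · intro H ε ε' hε hε'
    by_contra hdvd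
    obtain ⟨n, hn3, hd1, hd2⟩ :
        ∃ n : ℕ, 3 ≤ n ∧ (n:ℤ) ∣ (a + ε * c) ∧ (n:ℤ) ∣ (b + ε' * d) := by
      rcases Nat.eq_zero_or_pos (Int.gcd (a + ε * c) (b + ε' * d)) with h0 | hpos
      · obtain ⟨h1, h2⟩ := Int.gcd_eq_zero_iff.mp h0
        exact ⟨3, le_refl 3, h1 ▸ dvd_zero _, h2 ▸ dvd_zero _⟩
      · refine ⟨Int.gcd (a + ε * c) (b + ε' * d), ?_,
          Int.gcd_dvd_left _ _, Int.gcd_dvd_right _ _⟩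
        by_contra hlt
        push_neg at hlt
        have : Int.gcd (a + ε * c) (b + ε' * d) = 1 ∨
            Int.gcd (a + ε * c) (b + ε' * d) = 2 := by omega
        rcases this with h | h <;> rw [h] at hdvd <;> norm_num at hdvd
    set z := Circle.exp (2 * π / n) with hz
    obtain ⟨hzn, hz2⟩ := exp_order n hn3
    have hza : z ^ (a + ε * c) = 1 := by
      obtain ⟨k, hk⟩ := hd1
      rw [hk, _root_.zpow_mul, hzn, _root_.one_zpow]
    have hzb : z ^ (b + ε' * d) = 1 := by
      obtain ⟨k, hk⟩ := hd2
      rw [hk, _root_.zpow_mul, hzn, _root_.one_zpow]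
    obtain ⟨A, hAm, hAf⟩ := exists_wit z a c ε hε hza
    obtain ⟨B, hBm, hBf⟩ := exists_wit z b d ε' hε' hzb
    have hall := H z ⟨A, B, hAm, hBm, hAf, hBf⟩
    have h1 := hall 1 1 one_mem' one_mem'
    have hJ := hall Jmat Jmat Jmat_mem Jmat_mem
    have eas : z ^ (a - c) = 1 := by
      rw [_root_.zpow_sub]; exact fix_one_imp _ _ h1.1
    have ebs : z ^ (b - d) = 1 := by
      rw [_root_.zpow_sub]; exact fix_one_imp _ _ h1.2
    have eaa : z ^ (a + c) = 1 := by
      rw [_root_.zpow_add]; exact fix_J_imp _ _ hJ.1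
    have eba : z ^ (b + d) = 1 := by
      rw [_root_.zpow_add]; exact fix_J_imp _ _ hJ.2
    have p2a : z ^ (2 * a) = 1 := by
      rw [show 2 * a = (a + c) + (a - c) from by ring, _root_.zpow_add, eaa, eas, one_mul]
    have p2c : z ^ (2 * c) = 1 := by
      rw [show 2 * c = (a + c) - (a - c) from by ring, _root_.zpow_sub, eaa, eas, inv_one,
        one_mul]
    have p2b : z ^ (2 * b) = 1 := by
      rw [show 2 * b = (b + d) + (b - d) from by ring, _root_.zpow_add, eba, ebs, one_mul]
    have p2d : z ^ (2 * d) = 1 := by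
      rw [show 2 * d = (b + d) - (b - d) from by ring, _root_.zpow_sub, eba, ebs, inv_one,
        one_mul]
    have g1 := zpow_two_gcd z c d p2c p2d
    have g2 := zpow_two_gcd z b _ p2b g1
    have g3 := zpow_two_gcd z a _ p2a g2
    rw [hgcd] at g3
    norm_num at g3
    exact hz2 g3
  · intro H z hsome A' B' hA' hB'
    obtain ⟨A, B, hA, hB, hfA, hfB⟩ := hsome
    have key : ∀ p q : ℤ, (z ^ p * (z ^ q)⁻¹ = 1 ∨ z ^ p * z ^ q = 1) →
        ∃ ε : ℤ, (ε = 1 ∨ ε = -1) ∧ z ^ (p + ε * q) = 1 := by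
      intro p q hpq
      rcases hpq with h | h
      · exact ⟨-1, Or.inr rfl, by
          rw [show p + (-1) * q = p - q from by ring, _root_.zpow_sub]; exact h⟩
      · exact ⟨1, Or.inl rfl, by rw [one_mul, _root_.zpow_add]; exact h⟩
    obtain ⟨ε, hε, hz1⟩ := key a c (fix_imp _ _ A (det_one_of_mem hA) hfA)
    obtain ⟨ε', hε', hz1'⟩ := key b d (fix_imp _ _ B (det_one_of_mem hB) hfB)
    have hg := H ε ε' hε hε'
    have hzg : z ^ (Int.gcd (a + ε * c) (b + ε' * d) : ℤ) = 1 := zpow_gcd z _ _ hz1 hz1'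
    obtain ⟨k, hk⟩ := hg
    have hz2 : z ^ (2:ℤ) = 1 := by
      rw [hk, _root_.zpow_mul, hzg, _root_.one_zpow]
    obtain ⟨q1, q2⟩ := pair_of z a c ε hε hz1 hz2
    obtain ⟨q3, q4⟩ := pair_of z b d ε' hε' hz1' hz2
    exact ⟨fix_all _ _ q1 q2 A', fix_all _ _ q3 q4 B'⟩
end
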